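/- Let d ≥ 2 be an integer and a a nonzero rational number. Then ψ_{d,a,−1} has no rational periodic cycle of length at least 2; that is, every point of ℙ¹(ℚ) that is periodic under ψ_{d,a,−1} is a fixed point. -/

import Mathlib

/-- The map `ψ_{d,a,b} : ℙ¹(ℚ) → ℙ¹(ℚ)`, with `ℙ¹(ℚ)` modeled as `Option ℚ`
(`some z` is the affine point `z`, and `none` is the point at infinity `[1 : 0]`).
In homogeneous coordinates the map is `[X : Y] ↦ [X·Y^{d−1} : a·X^d + b·Y^d]`;
on the affine chart it is `z ↦ z / (a·z^d + b)`, the point at infinity mapping to `0`. -/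
def psi (d : ℕ) (a b : ℚ) : Option ℚ → Option ℚ
  | none => some 0
  | some z => if a * z ^ d + b = 0 then none else some (z / (a * z ^ d + b))

/-- A nonzero rational all of whose `p`-adic valuations vanish is `±1`. -/
lemma rat_eq_one_or_neg_one_of_padicValRat_zero (q : ℚ) (hq : q ≠ 0)
    (h : ∀ p : ℕ, p.Prime → padicValRat p q = 0) : q = 1 ∨ q = -1 := by
  have hnum0 : q.num ≠ 0 := Rat.num_ne_zero.2 hq
  have hden : q.den = 1 := by
    rw [Nat.eq_one_iff_not_exists_prime_dvd]
    intro p hp hdvd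
    haveI : Fact p.Prime := ⟨hp⟩
    have h1 : 1 ≤ padicValNat p q.den := one_le_padicValNat_of_dvd q.pos.ne' hdvd
    have h2 : ¬ p ∣ q.num.natAbs := by
      intro hdd
      have : p ∣ 1 := q.reduced ▸ Nat.dvd_gcd hdd hdvd
      exact hp.one_lt.ne' (Nat.dvd_one.mp this)
    have h3 : padicValInt p q.num = 0 := by
      rw [padicValInt]; exact padicValNat.eq_zero_of_not_dvd h2
    have h4 := h p hp
    rw [padicValRat_def, h3] at h4
    omega
  have hnum : q.num.natAbs = 1 := by
    rw [Nat.eq_one_iff_not_exists_prime_dvd]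
    intro p hp hdvd
    haveI : Fact p.Prime := ⟨hp⟩
    have h1 : 1 ≤ padicValNat p q.num.natAbs :=
      one_le_padicValNat_of_dvd (by simpa using hnum0) hdvd
    have h4 := h p hp
    rw [padicValRat_def, hden, padicValInt] at h4
    simp only [padicValNat.one, Nat.cast_zero, sub_zero, Nat.cast_eq_zero] at h4
    omega
  have hq' : q = (q.num : ℚ) := by
    conv_lhs => rw [← Rat.num_div_den q]
    rw [hden]; simp
  rcases Int.natAbs_eq_iff.mp hnum with h1 | h1
  · left; rw [hq', h1]; norm_num
  · right; rw [hq', h1]; norm_num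

/-- Core arithmetic lemma: along a rational cycle of `z ↦ z/(a z^d - 1)` avoiding `0`
and poles, the first "denominator" `a·y₀^d − 1` equals `1`, so the point is fixed. -/
lemma core_cycle (d : ℕ) (hd : 2 ≤ d) (a : ℚ) (ha : a ≠ 0) (n : ℕ) (hn : 0 < n)
    (y : ℕ → ℚ) (hy : ∀ k, y k ≠ 0) (hw : ∀ k, a * y k ^ d - 1 ≠ 0)
    (hrec : ∀ k, y (k + 1) = y k / (a * y k ^ d - 1))
    (hper : ∀ k, y (k + n) = y k) :
    a * y 0 ^ d - 1 = 1 := by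
  have hval : ∀ p : ℕ, p.Prime → padicValRat p (a * y 0 ^ d - 1) = 0 := by
    intro p hp
    haveI : Fact p.Prime := ⟨hp⟩
    set c : ℤ := padicValRat p a with hc
    set v : ℕ → ℤ := fun k => padicValRat p (y k) with hv
    have hd' : (2 : ℤ) ≤ (d : ℤ) := by exact_mod_cast hd
    have hxne : ∀ k, a * y k ^ d ≠ 0 := fun k => mul_ne_zero ha (pow_ne_zero _ (hy k))
    have hx : ∀ k, padicValRat p (a * y k ^ d) = c + d * v k := by
      intro k
      rw [padicValRat.mul ha (pow_ne_zero _ (hy k)), padicValRat.pow (y k)]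
    have hsub : ∀ k, a * y k ^ d - 1 = a * y k ^ d + (-1) := fun k => by ring
    have hneg1 : padicValRat p (-1 : ℚ) = 0 := by simp
    have F1 : ∀ k, c + d * v k < 0 → padicValRat p (a * y k ^ d - 1) = c + d * v k := by
      intro k hk
      rw [hsub k, padicValRat.add_eq_of_lt (by rw [← hsub k]; exact hw k) (hxne k)
        (by norm_num) (by rw [hx k, hneg1]; exact hk), hx k]
    have F2 : ∀ k, 0 < c + d * v k → padicValRat p (a * y k ^ d - 1) = 0 := by
      intro k hk
      have heq : a * y k ^ d - 1 = (-1) + a * y k ^ d := by ring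
      rw [heq, padicValRat.add_eq_of_lt (by rw [← heq]; exact hw k) (by norm_num) (hxne k)
        (by rw [hx k, hneg1]; exact hk), hneg1]
    have F3 : ∀ k, c + d * v k = 0 → 0 ≤ padicValRat p (a * y k ^ d - 1) := by
      intro k hk
      have h := padicValRat.min_le_padicValRat_add (p := p)
        (q := a * y k ^ d) (r := -1) (by rw [← hsub k]; exact hw k)
      rw [hx k, hneg1, hk] at h
      rw [hsub k]
      simpa using h
    have vstep : ∀ k, v (k + 1) = v k - padicValRat p (a * y k ^ d - 1) := by
      intro k
      show padicValRat p (y (k + 1)) = _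
      rw [hrec k, padicValRat.div (hy k) (hw k)]
    have claim1 : ∀ k, 0 ≤ c + d * v k := by
      intro k
      by_contra hlt
      push_neg at hlt
      have h1 : v (k + 1) = v k - (c + d * v k) := by rw [vstep k, F1 k hlt]
      have h2 : 0 < c + d * v (k + 1) := by
        have e : c + d * v (k + 1) = (c + d * v k) - (d : ℤ) * (c + d * v k) := by
          rw [h1]; ring
        nlinarith
      have h3 : ∀ j, v (k + 1 + j) = v (k + 1) := by
        intro j
        induction j with
        | zero => rfl
        | succ j ih =>
          have hpos : 0 < c + d * v (k + 1 + j) := by rw [ih]; exact h2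
          have hstep : v (k + 1 + j + 1) = v (k + 1 + j) := by
            rw [vstep (k + 1 + j), F2 _ hpos, sub_zero]
          rw [show k + 1 + (j + 1) = k + 1 + j + 1 by ring, hstep, ih]
      have h4 : v (k + n) = v (k + 1) := by
        have h5 := h3 (n - 1)
        rwa [show k + 1 + (n - 1) = k + n by omega] at h5
      have h5 : v (k + n) = v k := by
        show padicValRat p (y (k + n)) = padicValRat p (y k)
        rw [hper k]
      linarith
    have claim2 : ∀ k, padicValRat p (a * y k ^ d - 1) = 0 := by
      intro k
      rcases lt_trichotomy (c + d * v k) 0 with h | h | h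
      · exact absurd h (not_lt.mpr (claim1 k))
      · have h0 := F3 k h
        by_contra hne
        have hpos : 0 < padicValRat p (a * y k ^ d - 1) := lt_of_le_of_ne h0 (Ne.symm hne)
        have h1 : v (k + 1) = v k - padicValRat p (a * y k ^ d - 1) := vstep k
        have h2 := claim1 (k + 1)
        have e : c + d * v (k + 1) =
            (c + d * v k) - (d : ℤ) * padicValRat p (a * y k ^ d - 1) := by
          rw [h1]; ring
        nlinarith
      · exact F2 k h
    exact claim2 0
  rcases rat_eq_one_or_neg_one_of_padicValRat_zero _ (hw 0) hval with h | h
  · exact h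
  · exfalso
    have h0 : a * y 0 ^ d = 0 := by linarith
    exact (mul_ne_zero ha (pow_ne_zero _ (hy 0))) h0

/-- For `d ≥ 2` and a nonzero rational `a`, the map `ψ_{d,a,−1}`
has no rational periodic cycle of length `≥ 2`: every rational periodic point is
a fixed point. -/
theorem periodic_implies_fixed_psi_b_neg_one
    (d : ℕ) (hd : 2 ≤ d) (a : ℚ) (ha : a ≠ 0)
    (P : Option ℚ) (hP : ∃ n : ℕ, 0 < n ∧ (psi d a (-1))^[n] P = P) :
    psi d a (-1) P = P := by
  obtain ⟨n, hn, hper⟩ := hP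
  have hd0 : d ≠ 0 := by omega
  have hzero_fix : psi d a (-1) (some 0) = some 0 := by
    simp [psi, zero_pow hd0]
  have hzero_iter : ∀ m, (psi d a (-1))^[m] (some 0) = some 0 := by
    intro m
    induction m with
    | zero => rfl
    | succ m ih => rw [Function.iterate_succ_apply', ih, hzero_fix]
  match P, hper with
  | none, hper =>
    exfalso
    obtain ⟨m, rfl⟩ : ∃ m, n = m + 1 := ⟨n - 1, by omega⟩
    rw [Function.iterate_succ_apply] at hper
    have h0 : psi d a (-1) none = some 0 := rfl
    rw [h0, hzero_iter] at hper
    exact absurd hper (by simp)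
  | some z, hper =>
    by_cases hz : z = 0
    · subst hz; exact hzero_fix
    have hperiter : ∀ q : ℕ, (psi d a (-1))^[q * n] (some z) = some z := by
      intro q
      induction q with
      | zero => simp
      | succ q ih =>
        rw [show (q + 1) * n = q * n + n by ring, Function.iterate_add_apply, hper, ih]
    have claimB : ∀ k, (psi d a (-1))^[k] (some z) ≠ some 0 := by
      intro k hk
      have hle : k + 1 ≤ (k + 1) * n := Nat.le_mul_of_pos_right (k + 1) hn
      have h1 := hperiter (k + 1)
      rw [show (k + 1) * n = ((k + 1) * n - k) + k by omega, Function.iterate_add_apply, hk,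
        hzero_iter] at h1
      exact hz (Option.some.inj h1).symm
    have claimC : ∀ k, (psi d a (-1))^[k] (some z) ≠ none := by
      intro k hk
      apply claimB (k + 1)
      rw [Function.iterate_succ_apply', hk]
      rfl
    have horbit : ∀ k, ∃ w : ℚ,
        (psi d a (-1))^[k] (some z) = some w ∧ w ≠ 0 ∧ a * w ^ d + (-1) ≠ 0 := by
      intro k
      cases hk : (psi d a (-1))^[k] (some z) with
      | none => exact absurd hk (claimC k)
      | some w =>
        refine ⟨w, rfl, ?_, ?_⟩
        · rintro rfl; exact claimB k hk
        · intro h0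
          apply claimC (k + 1)
          rw [Function.iterate_succ_apply', hk]
          simp [psi, h0]
    choose y hy1 hy2 hy3 using horbit
    have hy0 : y 0 = z := by
      have h := hy1 0
      rw [Function.iterate_zero_apply] at h
      exact (Option.some.inj h).symm
    have hrec : ∀ k, y (k + 1) = y k / (a * y k ^ d - 1) := by
      intro k
      have h1 := hy1 (k + 1)
      rw [Function.iterate_succ_apply', hy1 k] at h1
      have h2 : psi d a (-1) (some (y k)) = some (y k / (a * y k ^ d + (-1))) := by
        simp only [psi]
        rw [if_neg (hy3 k)]
      rw [h2] at h1
      have h3 := Option.some.inj h1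
      rw [← h3, sub_eq_add_neg]
    have hw : ∀ k, a * y k ^ d - 1 ≠ 0 := by
      intro k
      have h := hy3 k
      rwa [← sub_eq_add_neg] at h
    have hpern : ∀ k, y (k + n) = y k := by
      intro k
      have h1 := hy1 (k + n)
      rw [Function.iterate_add_apply, hper, hy1 k] at h1
      exact (Option.some.inj h1).symm
    have hkey := core_cycle d hd a ha n hn y hy2 hw hrec hpern
    rw [hy0] at hkey
    have hcond : a * z ^ d + (-1) ≠ 0 := by
      rw [← sub_eq_add_neg, hkey]; norm_num
    show psi d a (-1) (some z) = some z
    simp only [psi]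
    rw [if_neg hcond]
    congr 1
    rw [← sub_eq_add_neg, hkey, div_one]
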